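/- arXiv:1402.4173 — 2 statements merged into one kernel-verified Lean document; each statement's English description precedes it below -/
import Mathlib

section
/- Every positive global solution ψ of ψ'' + 2ψ' + ψ = 1/ψ on [0,∞) with bounded energy G(0) < ∞ satisfies: there exist constants 0 < a ≤ b and C such that a ≤ ψ(t) ≤ b and |ψ'(t)| ≤ C for all t ≥ 0, and ∫₀^∞ ψ'(s)² ds ≤ G(0)/2 < ∞. -/
open MeasureTheory

/-- The Lyapunov functional `G = (1/2)ψ'² + (1/2)ψ² − log ψ − 1/2`. -/
noncomputable def lyapG (ψ ψ' : ℝ → ℝ) (t : ℝ) : ℝ :=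
  1 / 2 * ψ' t ^ 2 + 1 / 2 * ψ t ^ 2 - Real.log (ψ t) - 1 / 2

/-- Every positive global solution `ψ` of `ψ'' + 2ψ' + ψ = 1/ψ` on `[0,∞)` satisfies
uniform bounds `0 < a ≤ ψ ≤ b`, `|ψ'| ≤ C`, and `∫₀^∞ ψ'(s)² ds ≤ G(0)/2 < ∞`. -/
theorem global_solution_uniform_bounds (ψ ψ' ψ'' : ℝ → ℝ)
    (hpos : ∀ t ∈ Set.Ici (0 : ℝ), 0 < ψ t)
    (hd1 : ∀ t ∈ Set.Ici (0 : ℝ), HasDerivWithinAt ψ (ψ' t) (Set.Ici 0) t)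
    (hd2 : ∀ t ∈ Set.Ici (0 : ℝ), HasDerivWithinAt ψ' (ψ'' t) (Set.Ici 0) t)
    (hODE : ∀ t ∈ Set.Ici (0 : ℝ), ψ'' t + 2 * ψ' t + ψ t = 1 / ψ t) :
    ∃ a b C : ℝ, 0 < a ∧ a ≤ b ∧
      (∀ t ∈ Set.Ici (0 : ℝ), a ≤ ψ t ∧ ψ t ≤ b ∧ |ψ' t| ≤ C) ∧
      IntegrableOn (fun s => ψ' s ^ 2) (Set.Ioi (0 : ℝ)) ∧
      ∫ s in Set.Ioi (0 : ℝ), ψ' s ^ 2 ≤ lyapG ψ ψ' 0 / 2 := by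
  -- derivative of the Lyapunov functional
  have hg : ∀ t ∈ Set.Ici (0 : ℝ),
      HasDerivWithinAt (lyapG ψ ψ') (-(2 * ψ' t ^ 2)) (Set.Ici 0) t := by
    intro t ht
    have hψ : ψ t ≠ 0 := (hpos t ht).ne'
    have hODE' : ψ'' t = 1 / ψ t - ψ t - 2 * ψ' t := by linarith [hODE t ht]
    have H : HasDerivWithinAt (lyapG ψ ψ')
        (1 / 2 * (2 * ψ' t ^ 1 * ψ'' t) + 1 / 2 * (2 * ψ t ^ 1 * ψ' t) - ψ' t / ψ t)
        (Set.Ici 0) t := by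
      exact ((((hd2 t ht).pow 2).const_mul (1/2)).add
        (((hd1 t ht).pow 2).const_mul (1/2))).sub ((hd1 t ht).log hψ) |>.sub_const (1/2)
    convert H using 1
    rw [hODE']
    field_simp
    ring
  -- continuity of ψ and ψ' on [0,∞)
  have hcψ' : ContinuousOn ψ' (Set.Ici 0) := fun t ht => (hd2 t ht).continuousWithinAt
  have hcg : ContinuousOn (lyapG ψ ψ') (Set.Ici 0) := fun t ht => (hg t ht).continuousWithinAt
  -- FTC identity
  have key : ∀ T : ℝ, 0 ≤ T →
      (∫ s in (0:ℝ)..T, 2 * ψ' s ^ 2) = lyapG ψ ψ' 0 - lyapG ψ ψ' T := by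
    intro T hT
    have hint : IntervalIntegrable (fun s => -(2 * ψ' s ^ 2)) volume 0 T := by
      apply ContinuousOn.intervalIntegrable
      rw [Set.uIcc_of_le hT]
      exact (continuousOn_const.mul ((hcψ'.mono Set.Icc_subset_Ici_self).pow 2)).neg
    have := intervalIntegral.integral_eq_sub_of_hasDeriv_right_of_le hT
      (hcg.mono Set.Icc_subset_Ici_self)
      (fun x hx => (hg x (le_of_lt hx.1)).mono (fun y hy => le_trans hx.1.le hy.le)) hint
    have h2 : (∫ s in (0:ℝ)..T, -(2 * ψ' s ^ 2)) = -(∫ s in (0:ℝ)..T, 2 * ψ' s ^ 2) := by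
      simp [intervalIntegral.integral_neg]
    rw [h2] at this
    linarith
  -- nonnegativity of G
  have hgnn : ∀ t ∈ Set.Ici (0 : ℝ), 0 ≤ lyapG ψ ψ' t := by
    intro t ht
    have hlog := Real.log_le_sub_one_of_pos (hpos t ht)
    unfold lyapG
    nlinarith [sq_nonneg (ψ' t), sq_nonneg (ψ t - 1)]
  set G0 : ℝ := lyapG ψ ψ' 0 with hG0def
  have hG0 : 0 ≤ G0 := hgnn 0 (Set.mem_Ici.mpr le_rfl)
  -- monotone bound
  have hmono : ∀ t ∈ Set.Ici (0 : ℝ), lyapG ψ ψ' t ≤ G0 := by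
    intro t ht
    have h1 := key t ht
    have h2 : (0:ℝ) ≤ ∫ s in (0:ℝ)..t, 2 * ψ' s ^ 2 :=
      intervalIntegral.integral_nonneg ht (fun x _ => by positivity)
    linarith
  refine ⟨Real.exp (-(G0 + 1/2)), 1 + Real.sqrt (2 * G0), Real.sqrt (2 * G0),
    Real.exp_pos _, ?_, ?_, ?_, ?_⟩
  · have : Real.exp (-(G0 + 1/2)) ≤ 1 := Real.exp_le_one_iff.mpr (by linarith)
    linarith [Real.sqrt_nonneg (2 * G0)]
  · intro t ht
    have hG := hmono t ht
    have hlog := Real.log_le_sub_one_of_pos (hpos t ht)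
    have hglb : lyapG ψ ψ' t = 1/2 * ψ' t ^ 2 + 1/2 * ψ t ^ 2 - Real.log (ψ t) - 1/2 := rfl
    refine ⟨?_, ?_, ?_⟩
    · have hl : -(G0 + 1/2) ≤ Real.log (ψ t) := by nlinarith [sq_nonneg (ψ' t), sq_nonneg (ψ t)]
      calc Real.exp (-(G0 + 1/2)) ≤ Real.exp (Real.log (ψ t)) := Real.exp_le_exp.mpr hl
        _ = ψ t := Real.exp_log (hpos t ht)
    · nlinarith [Real.sq_sqrt (by linarith : (0:ℝ) ≤ 2 * G0), Real.sqrt_nonneg (2 * G0),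
        sq_nonneg (ψ' t), sq_nonneg (ψ t - 1 - Real.sqrt (2 * G0))]
    · have hsq : ψ' t ^ 2 ≤ 2 * G0 := by nlinarith [sq_nonneg (ψ t - 1)]
      rw [← Real.sqrt_sq_eq_abs]
      exact Real.sqrt_le_sqrt hsq
  · -- integrability
    apply MeasureTheory.integrableOn_Ioi_of_intervalIntegral_norm_bounded (G0 / 2) 0
      (b := fun n : ℕ => (n : ℝ)) (l := Filter.atTop)
      (fun n => (((hcψ'.mono Set.Icc_subset_Ici_self).pow 2).integrableOn_Icc).mono_set
        Set.Ioc_subset_Icc_self)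
      tendsto_natCast_atTop_atTop
    filter_upwards with n
    have h1 := key n (Nat.cast_nonneg n)
    have h2 : (∫ s in (0:ℝ)..(n:ℝ), ‖ψ' s ^ 2‖) = ∫ s in (0:ℝ)..(n:ℝ), ψ' s ^ 2 := by
      congr 1 with s; exact abs_of_nonneg (sq_nonneg _)
    have h3 : (∫ s in (0:ℝ)..(n:ℝ), 2 * ψ' s ^ 2) = 2 * ∫ s in (0:ℝ)..(n:ℝ), ψ' s ^ 2 :=
      intervalIntegral.integral_const_mul 2 _
    have h4 := hgnn (n:ℝ) (Set.mem_Ici.mpr (Nat.cast_nonneg n))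
    simp only [Pi.pow_apply]
    rw [h2]
    linarith
  · -- integral bound
    have hInt : IntegrableOn (fun s => ψ' s ^ 2) (Set.Ioi (0 : ℝ)) := by
      apply MeasureTheory.integrableOn_Ioi_of_intervalIntegral_norm_bounded (G0 / 2) 0
        (b := fun n : ℕ => (n : ℝ)) (l := Filter.atTop)
        (fun n => (((hcψ'.mono Set.Icc_subset_Ici_self).pow 2).integrableOn_Icc).mono_set
          Set.Ioc_subset_Icc_self)
        tendsto_natCast_atTop_atTop
      filter_upwards with n
      have h1 := key n (Nat.cast_nonneg n)
      have h2 : (∫ s in (0:ℝ)..(n:ℝ), ‖ψ' s ^ 2‖) = ∫ s in (0:ℝ)..(n:ℝ), ψ' s ^ 2 := by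
        congr 1 with s; exact abs_of_nonneg (sq_nonneg _)
      have h3 : (∫ s in (0:ℝ)..(n:ℝ), 2 * ψ' s ^ 2) = 2 * ∫ s in (0:ℝ)..(n:ℝ), ψ' s ^ 2 :=
        intervalIntegral.integral_const_mul 2 _
      have h4 := hgnn (n:ℝ) (Set.mem_Ici.mpr (Nat.cast_nonneg n))
      simp only [Pi.pow_apply]; rw [h2]; linarith
    have htd := MeasureTheory.intervalIntegral_tendsto_integral_Ioi 0 hInt
      (tendsto_natCast_atTop_atTop (R := ℝ))
    refine le_of_tendsto htd ?_
    filter_upwards with n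
    have h1 := key n (Nat.cast_nonneg n)
    have h3 : (∫ s in (0:ℝ)..(n:ℝ), 2 * ψ' s ^ 2) = 2 * ∫ s in (0:ℝ)..(n:ℝ), ψ' s ^ 2 :=
      intervalIntegral.integral_const_mul 2 _
    have h4 := hgnn (n:ℝ) (Set.mem_Ici.mpr (Nat.cast_nonneg n))
    linarith
end

section
/- (Weighted convolution estimate) Let γ, β < 2 with γ + β > 2, and let f: ℝ² → ℝ be measurable with |f(y)| ≤ M(1+|y|)^{−γ} for all y. Then there is a constant C = C(γ,β) such that for all x ∈ ℝ², |∫_{ℝ²} f(y)/|x−y|^β dy| ≤ C·M·(1+|x|)^{2−β−γ}. -/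
open MeasureTheory

open Metric Set ENNReal

noncomputable abbrev E2 := EuclideanSpace ℝ (Fin 2)

lemma dyadic_Ioc {t : ℝ} (ht : 1 < t) : ∃ k : ℕ, (2:ℝ)^k < t ∧ t ≤ 2^(k+1) := by
  obtain ⟨n, hn1, hn2⟩ := exists_mem_Ioc_zpow (by linarith : (0:ℝ) < t) one_lt_two
  have hn0 : 0 ≤ n := by
    by_contra h
    push_neg at h
    have h2 : n + 1 ≤ 0 := by omega
    have : (2:ℝ) ^ (n+1) ≤ 1 := zpow_le_one_of_nonpos₀ one_le_two h2
    linarith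
  refine ⟨n.toNat, ?_, ?_⟩
  · rwa [← zpow_natCast (2:ℝ) n.toNat, Int.toNat_of_nonneg hn0]
  · rw [← zpow_natCast (2:ℝ) (n.toNat+1), show ((n.toNat + 1 : ℕ) : ℤ) = n + 1 by omega]
    exact hn2

lemma dyadic_Ico {t : ℝ} (ht : 1 ≤ t) : ∃ k : ℕ, (2:ℝ)^k ≤ t ∧ t < 2^(k+1) := by
  obtain ⟨n, hn1, hn2⟩ := exists_mem_Ico_zpow (by linarith : (0:ℝ) < t) one_lt_two
  have hn0 : 0 ≤ n := by
    by_contra h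
    push_neg at h
    have h2 : n + 1 ≤ 0 := by omega
    have : (2:ℝ) ^ (n+1) ≤ 1 := zpow_le_one_of_nonpos₀ one_le_two h2
    linarith
  refine ⟨n.toNat, ?_, ?_⟩
  · rwa [← zpow_natCast (2:ℝ) n.toNat, Int.toNat_of_nonneg hn0]
  · rw [← zpow_natCast (2:ℝ) (n.toNat+1), show ((n.toNat + 1 : ℕ) : ℤ) = n + 1 by omega]
    exact hn2

lemma rid {β r : ℝ} (hr : 0 < r) (k : ℕ) :
    (r/2^(k+1)) ^ (-β) * (r/2^k)^2 = r ^ (2-β) * 2^β * ((2:ℝ)^(β-2))^k := by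
  have h2 : (0:ℝ) < 2 := two_pos
  rw [Real.div_rpow hr.le (by positivity), div_pow,
    ← Real.rpow_natCast (2:ℝ) (k+1), ← Real.rpow_natCast (2:ℝ) k,
    ← Real.rpow_natCast ((2:ℝ)^(β-2)) k,
    ← Real.rpow_natCast r 2, ← Real.rpow_natCast ((2:ℝ)^(k:ℝ)) 2,
    ← Real.rpow_mul h2.le, ← Real.rpow_mul h2.le, ← Real.rpow_mul h2.le,
    div_mul_div_comm, ← Real.rpow_add hr]
  rw [div_eq_iff (by positivity), mul_assoc, mul_assoc, ← Real.rpow_add h2, ← Real.rpow_add h2]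
  have h3 : (-β) + (2:ℕ) = 2 - β := by push_cast; ring
  rw [h3]
  have h4 : (β - 2) * (k:ℝ) + (((k:ℕ) + 1 : ℕ) * -β + (k:ℝ) * (2:ℕ)) = -β := by push_cast; ring
  rw [h4, ← Real.rpow_add h2, add_neg_cancel, Real.rpow_zero, mul_one]

lemma lem_ball {β : ℝ} (hβ0 : 0 < β) (hβ2 : β < 2) :
    ∃ K : ℝ≥0∞, K ≠ ∞ ∧ ∀ (c : E2) (r : ℝ), 0 < r →
      ∫⁻ y in ball c r, ENNReal.ofReal (dist c y ^ (-β)) ≤ K * ENNReal.ofReal (r ^ (2-β)) := by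
  set q : ℝ := (2:ℝ)^(β-2) with hq
  have hq0 : 0 < q := by positivity
  have hq1 : q < 1 := by
    have : (2:ℝ)^(β-2) < 2^(0:ℝ) := Real.rpow_lt_rpow_of_exponent_lt one_lt_two (by linarith)
    simpa using this
  set V := volume (ball (0:E2) 1) with hV
  have hVfin : V ≠ ∞ := measure_ball_lt_top.ne
  have hsub : (1:ℝ≥0∞) - ENNReal.ofReal q ≠ 0 := by
    simp only [ne_eq, tsub_eq_zero_iff_le, not_le]
    exact lt_of_lt_of_le (ENNReal.ofReal_lt_one.2 hq1) le_rfl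
  refine ⟨ENNReal.ofReal (2^β) * (1 - ENNReal.ofReal q)⁻¹ * V,
    ENNReal.mul_ne_top (ENNReal.mul_ne_top ofReal_ne_top (ENNReal.inv_ne_top.2 hsub)) hVfin,
    fun c r hr => ?_⟩
  set S : ℕ → Set E2 := fun k => ball c (r/2^k) \ ball c (r/2^(k+1)) with hS
  have cover : ball c r ⊆ {c} ∪ ⋃ k, S k := by
    intro y hy
    rcases eq_or_ne y c with h | h
    · exact Or.inl h
    · have hd : 0 < dist y c := dist_pos.2 h
      have hdr : dist y c < r := mem_ball.1 hy
      have ht : 1 < r / dist y c := (one_lt_div hd).2 hdr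
      obtain ⟨k, hk1, hk2⟩ := dyadic_Ioc ht
      refine Or.inr (mem_iUnion.2 ⟨k, ?_, ?_⟩)
      · exact mem_ball.2 ((lt_div_iff₀ (by positivity)).2 (by
          rw [mul_comm]; exact (lt_div_iff₀ hd).1 hk1))
      · intro hmem
        have : dist y c < r / 2^(k+1) := mem_ball.1 hmem
        have : r ≤ dist y c * 2^(k+1) := by
          have := (div_le_iff₀ hd).1 hk2; linarith
        have h2 : r / 2^(k+1) ≤ dist y c := (div_le_iff₀ (by positivity)).2 (by linarith)
        linarith
  have key : ∀ k, ∫⁻ y in S k, ENNReal.ofReal (dist c y ^ (-β)) ≤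
      ENNReal.ofReal (r^(2-β) * 2^β) * ENNReal.ofReal q ^ k * V := by
    intro k
    have hrk : 0 < r / 2^(k+1) := by positivity
    have hbound : ∀ y ∈ S k, ENNReal.ofReal (dist c y ^ (-β)) ≤
        ENNReal.ofReal ((r/2^(k+1)) ^ (-β)) := by
      intro y hy
      apply ENNReal.ofReal_le_ofReal
      have hge : r/2^(k+1) ≤ dist c y := by
        rw [dist_comm]
        by_contra hcon
        exact hy.2 (mem_ball.2 (lt_of_not_ge hcon))
      exact Real.rpow_le_rpow_of_nonpos hrk hge (by linarith)
    calc ∫⁻ y in S k, ENNReal.ofReal (dist c y ^ (-β))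
        ≤ ∫⁻ _ in S k, ENNReal.ofReal ((r/2^(k+1)) ^ (-β)) :=
          setLIntegral_mono' (measurableSet_ball.diff measurableSet_ball) hbound
      _ = ENNReal.ofReal ((r/2^(k+1)) ^ (-β)) * volume (S k) := setLIntegral_const _ _
      _ ≤ ENNReal.ofReal ((r/2^(k+1)) ^ (-β)) * volume (ball c (r/2^k)) := by
          gcongr; exact diff_subset
      _ = ENNReal.ofReal ((r/2^(k+1)) ^ (-β)) * (ENNReal.ofReal ((r/2^k)^2) * V) := by
          rw [Measure.addHaar_ball volume c (by positivity : (0:ℝ) ≤ r / 2^k)]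
          norm_num [hV]
      _ = ENNReal.ofReal ((r/2^(k+1)) ^ (-β) * (r/2^k)^2) * V := by
          rw [← mul_assoc, ← ENNReal.ofReal_mul (by positivity)]
      _ = ENNReal.ofReal (r^(2-β) * 2^β * q^k) * V := by rw [rid hr]
      _ = ENNReal.ofReal (r^(2-β) * 2^β) * ENNReal.ofReal q ^ k * V := by
          rw [ENNReal.ofReal_mul (by positivity), ENNReal.ofReal_pow hq0.le]
  calc ∫⁻ y in ball c r, ENNReal.ofReal (dist c y ^ (-β))
      ≤ ∫⁻ y in {c} ∪ ⋃ k, S k, ENNReal.ofReal (dist c y ^ (-β)) := lintegral_mono_set cover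
    _ ≤ (∫⁻ y in {c}, ENNReal.ofReal (dist c y ^ (-β))) +
        ∫⁻ y in ⋃ k, S k, ENNReal.ofReal (dist c y ^ (-β)) := lintegral_union_le _ _ _
    _ ≤ 0 + ∑' k, ∫⁻ y in S k, ENNReal.ofReal (dist c y ^ (-β)) := by
        gcongr
        · rw [setLIntegral_measure_zero _ _ (measure_singleton c)]
        · exact lintegral_iUnion_le _ _
    _ ≤ ∑' k, ENNReal.ofReal (r^(2-β) * 2^β) * ENNReal.ofReal q ^ k * V := by
        rw [zero_add]; exact ENNReal.tsum_le_tsum key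
    _ = ENNReal.ofReal (r^(2-β) * 2^β) * (1 - ENNReal.ofReal q)⁻¹ * V := by
        rw [ENNReal.tsum_mul_right, ENNReal.tsum_mul_left, ENNReal.tsum_geometric]
    _ = ENNReal.ofReal (2^β) * (1 - ENNReal.ofReal q)⁻¹ * V * ENNReal.ofReal (r^(2-β)) := by
        rw [ENNReal.ofReal_mul (by positivity)]; ring

lemma rid2 {s r : ℝ} (hr : 0 < r) (k : ℕ) :
    (r*2^k) ^ (-s) * (r*2^(k+1))^2 = r ^ (2-s) * 4 * ((2:ℝ)^(2-s))^k := by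
  have h2 : (0:ℝ) < 2 := two_pos
  rw [Real.mul_rpow hr.le (by positivity), mul_pow,
    ← Real.rpow_natCast (2:ℝ) k, ← Real.rpow_natCast (2:ℝ) (k+1),
    ← Real.rpow_natCast ((2:ℝ)^(2-s)) k,
    ← Real.rpow_natCast r 2, ← Real.rpow_natCast ((2:ℝ)^(((k+1):ℕ):ℝ)) 2,
    ← Real.rpow_mul h2.le, ← Real.rpow_mul h2.le, ← Real.rpow_mul h2.le,
    mul_mul_mul_comm, ← Real.rpow_add hr, ← Real.rpow_add h2,
    show (4:ℝ) = 2^(2:ℝ) by norm_num, mul_assoc, ← Real.rpow_add h2]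
  congr 1
  · congr 1; push_cast; ring
  · congr 1; push_cast; ring

lemma lem_compl {s : ℝ} (hs : 2 < s) :
    ∃ K : ℝ≥0∞, K ≠ ∞ ∧ ∀ (r : ℝ), 0 < r →
      ∫⁻ y in (ball (0:E2) r)ᶜ, ENNReal.ofReal (‖y‖ ^ (-s)) ≤ K * ENNReal.ofReal (r ^ (2-s)) := by
  set q : ℝ := (2:ℝ)^(2-s) with hq
  have hq0 : 0 < q := by positivity
  have hq1 : q < 1 := by
    have : (2:ℝ)^(2-s) < 2^(0:ℝ) := Real.rpow_lt_rpow_of_exponent_lt one_lt_two (by linarith)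
    simpa using this
  set V := volume (ball (0:E2) 1) with hV
  have hVfin : V ≠ ∞ := measure_ball_lt_top.ne
  have hsub : (1:ℝ≥0∞) - ENNReal.ofReal q ≠ 0 := by
    simp only [ne_eq, tsub_eq_zero_iff_le, not_le]
    exact ENNReal.ofReal_lt_one.2 hq1
  refine ⟨ENNReal.ofReal 4 * (1 - ENNReal.ofReal q)⁻¹ * V,
    ENNReal.mul_ne_top (ENNReal.mul_ne_top ofReal_ne_top (ENNReal.inv_ne_top.2 hsub)) hVfin,
    fun r hr => ?_⟩
  set T : ℕ → Set E2 := fun k => ball 0 (r*2^(k+1)) \ ball 0 (r*2^k) with hT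
  have cover : (ball (0:E2) r)ᶜ ⊆ ⋃ k, T k := by
    intro y hy
    have hyr : r ≤ ‖y‖ := le_of_not_gt (fun h => hy (mem_ball_zero_iff.2 h))
    obtain ⟨k, hk1, hk2⟩ := dyadic_Ico ((one_le_div hr).2 hyr)
    refine mem_iUnion.2 ⟨k, mem_ball_zero_iff.2 ?_, fun hmem => ?_⟩
    · have := (div_lt_iff₀ hr).1 hk2; linarith [this]
    · have h1 : ‖y‖ < r * 2^k := mem_ball_zero_iff.1 hmem
      have h2 : r * 2^k ≤ ‖y‖ := by
        have := (le_div_iff₀ hr).1 hk1; linarith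
      linarith
  have key : ∀ k, ∫⁻ y in T k, ENNReal.ofReal (‖y‖ ^ (-s)) ≤
      ENNReal.ofReal (r^(2-s) * 4) * ENNReal.ofReal q ^ k * V := by
    intro k
    have hrk : 0 < r * 2^k := by positivity
    have hbound : ∀ y ∈ T k, ENNReal.ofReal (‖y‖ ^ (-s)) ≤
        ENNReal.ofReal ((r*2^k) ^ (-s)) := by
      intro y hy
      apply ENNReal.ofReal_le_ofReal
      have hge : r*2^k ≤ ‖y‖ := by
        by_contra hcon
        exact hy.2 (mem_ball_zero_iff.2 (lt_of_not_ge hcon))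
      exact Real.rpow_le_rpow_of_nonpos hrk hge (by linarith)
    calc ∫⁻ y in T k, ENNReal.ofReal (‖y‖ ^ (-s))
        ≤ ∫⁻ _ in T k, ENNReal.ofReal ((r*2^k) ^ (-s)) :=
          setLIntegral_mono' (measurableSet_ball.diff measurableSet_ball) hbound
      _ = ENNReal.ofReal ((r*2^k) ^ (-s)) * volume (T k) := setLIntegral_const _ _
      _ ≤ ENNReal.ofReal ((r*2^k) ^ (-s)) * volume (ball (0:E2) (r*2^(k+1))) := by
          gcongr; exact diff_subset
      _ = ENNReal.ofReal ((r*2^k) ^ (-s)) * (ENNReal.ofReal ((r*2^(k+1))^2) * V) := by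
          rw [Measure.addHaar_ball volume 0 (by positivity : (0:ℝ) ≤ r * 2^(k+1))]
          norm_num [hV]
      _ = ENNReal.ofReal ((r*2^k) ^ (-s) * (r*2^(k+1))^2) * V := by
          rw [← mul_assoc, ← ENNReal.ofReal_mul (by positivity)]
      _ = ENNReal.ofReal (r^(2-s) * 4 * q^k) * V := by rw [rid2 hr]
      _ = ENNReal.ofReal (r^(2-s) * 4) * ENNReal.ofReal q ^ k * V := by
          rw [ENNReal.ofReal_mul (by positivity), ENNReal.ofReal_pow hq0.le]
  calc ∫⁻ y in (ball (0:E2) r)ᶜ, ENNReal.ofReal (‖y‖ ^ (-s))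
      ≤ ∫⁻ y in ⋃ k, T k, ENNReal.ofReal (‖y‖ ^ (-s)) := lintegral_mono_set cover
    _ ≤ ∑' k, ∫⁻ y in T k, ENNReal.ofReal (‖y‖ ^ (-s)) := lintegral_iUnion_le _ _
    _ ≤ ∑' k, ENNReal.ofReal (r^(2-s) * 4) * ENNReal.ofReal q ^ k * V :=
        ENNReal.tsum_le_tsum key
    _ = ENNReal.ofReal (r^(2-s) * 4) * (1 - ENNReal.ofReal q)⁻¹ * V := by
        rw [ENNReal.tsum_mul_right, ENNReal.tsum_mul_left, ENNReal.tsum_geometric]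
    _ = ENNReal.ofReal 4 * (1 - ENNReal.ofReal q)⁻¹ * V * ENNReal.ofReal (r^(2-s)) := by
        rw [ENNReal.ofReal_mul (by positivity)]; ring

/-- Weighted convolution estimate in `ℝ²`: if `γ, β < 2`, `γ + β > 2` and
`|f(y)| ≤ M(1+|y|)^{−γ}`, then `|∫ f(y)/|x−y|^β dy| ≤ C·M·(1+|x|)^{2−β−γ}` with
`C = C(γ,β)`. -/
theorem weighted_convolution_estimate (γ β : ℝ) (hγ : γ < 2) (hβ : β < 2)
    (hγβ : 2 < γ + β) :
    ∃ C : ℝ, ∀ (M : ℝ) (f : EuclideanSpace ℝ (Fin 2) → ℝ), Measurable f →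
      (∀ y, |f y| ≤ M * (1 + ‖y‖) ^ (-γ)) →
      ∀ x : EuclideanSpace ℝ (Fin 2),
        |∫ y, f y / dist x y ^ β| ≤ C * M * (1 + ‖x‖) ^ (2 - β - γ) := by
  have hβ0 : 0 < β := by linarith
  have hγ0 : 0 < γ := by linarith
  obtain ⟨K₁, hK₁f, hK₁⟩ := lem_ball hβ0 hβ
  obtain ⟨K₂, hK₂f, hK₂⟩ := lem_ball hγ0 hγ
  obtain ⟨K₃, hK₃f, hK₃⟩ := lem_compl hγβ
  set D : ℝ≥0∞ := K₁ * .ofReal (2^(β+γ-2)) + K₂ * .ofReal (2^(2+β-γ)) + K₃ * .ofReal (2^(2-γ)) with hD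
  have hDf : D ≠ ∞ := by
    simp only [hD, ne_eq, ENNReal.add_eq_top, not_or]
    exact ⟨⟨ENNReal.mul_ne_top hK₁f ofReal_ne_top, ENNReal.mul_ne_top hK₂f ofReal_ne_top⟩,
      ENNReal.mul_ne_top hK₃f ofReal_ne_top⟩
  refine ⟨D.toReal, fun M f hf hfb x => ?_⟩
  set R : ℝ := 1 + ‖x‖ with hR
  have hR1 : 1 ≤ R := by simp [hR, norm_nonneg]
  have hR0 : 0 < R := by linarith
  have hM : 0 ≤ M := by
    have h := (abs_nonneg (f 0)).trans (hfb 0)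
    simpa using h
  set G : E2 → ℝ≥0∞ := fun y => ENNReal.ofReal ((1+‖y‖)^(-γ)) * ENNReal.ofReal (dist x y ^ (-β)) with hG
  -- pointwise bound
  have ptwise : ∀ y, ENNReal.ofReal ‖f y / dist x y ^ β‖ ≤ ENNReal.ofReal M * G y := by
    intro y
    have hd : 0 ≤ dist x y ^ β := Real.rpow_nonneg dist_nonneg β
    have h1 : ‖f y / dist x y ^ β‖ = |f y| * (dist x y ^ β)⁻¹ := by
      rw [Real.norm_eq_abs, div_eq_mul_inv, abs_mul, abs_inv, abs_of_nonneg hd]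
    have h2 : |f y| * (dist x y ^ β)⁻¹ ≤ (M * (1+‖y‖)^(-γ)) * (dist x y ^ β)⁻¹ :=
      mul_le_mul_of_nonneg_right (hfb y) (inv_nonneg.2 hd)
    have h3 : (M * (1+‖y‖)^(-γ)) * (dist x y ^ β)⁻¹ = M * ((1+‖y‖)^(-γ) * dist x y ^ (-β)) := by
      rw [Real.rpow_neg dist_nonneg]; ring
    rw [h1]
    calc ENNReal.ofReal (|f y| * (dist x y ^ β)⁻¹)
        ≤ ENNReal.ofReal (M * ((1+‖y‖)^(-γ) * dist x y ^ (-β))) :=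
          ENNReal.ofReal_le_ofReal (h3 ▸ h2)
      _ = ENNReal.ofReal M * G y := by
          rw [ENNReal.ofReal_mul hM, ENNReal.ofReal_mul (by positivity)]
  -- the three regions
  set A : Set E2 := ball x (R/2) with hA
  set B : Set E2 := ball (0:E2) (2*R) with hB
  have term1 : ∫⁻ y in A, G y ≤ K₁ * .ofReal (2^(β+γ-2)) * .ofReal (R^(2-β-γ)) := by
    have hb : ∀ y ∈ A, G y ≤ ENNReal.ofReal ((R/2)^(-γ)) * ENNReal.ofReal (dist x y ^ (-β)) := by
      intro y hy
      have h1 : dist x y < R/2 := by rw [dist_comm]; exact mem_ball.1 hy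
      have h2 : R/2 ≤ 1 + ‖y‖ := by
        have := norm_sub_norm_le x y
        have hd : dist x y = ‖x - y‖ := dist_eq_norm x y
        linarith [this, hd ▸ h1]
      exact mul_le_mul_of_nonneg_right
        (ENNReal.ofReal_le_ofReal (Real.rpow_le_rpow_of_nonpos (by positivity) h2 (by linarith)))
        zero_le
    calc ∫⁻ y in A, G y
        ≤ ∫⁻ y in A, ENNReal.ofReal ((R/2)^(-γ)) * ENNReal.ofReal (dist x y ^ (-β)) :=
          setLIntegral_mono' measurableSet_ball hb
      _ = ENNReal.ofReal ((R/2)^(-γ)) * ∫⁻ y in A, ENNReal.ofReal (dist x y ^ (-β)) :=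
          lintegral_const_mul' _ _ ofReal_ne_top
      _ ≤ ENNReal.ofReal ((R/2)^(-γ)) * (K₁ * ENNReal.ofReal ((R/2)^(2-β))) := by
          gcongr
          exact hK₁ x (R/2) (by positivity)
      _ = K₁ * (ENNReal.ofReal ((R/2)^(-γ)) * ENNReal.ofReal ((R/2)^(2-β))) := by ring
      _ = K₁ * .ofReal (2^(β+γ-2)) * .ofReal (R^(2-β-γ)) := by
          rw [← ENNReal.ofReal_mul (by positivity), ← Real.rpow_add (by positivity : (0:ℝ) < R/2)]
          rw [mul_assoc, ← ENNReal.ofReal_mul (by positivity)]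
          congr 2
          rw [Real.div_rpow hR0.le (by norm_num)]
          rw [show -γ + (2-β) = 2-β-γ by ring, div_eq_mul_inv, mul_comm]
          congr 1
          rw [← Real.rpow_neg (by norm_num : (0:ℝ) ≤ 2), show -(2-β-γ) = β+γ-2 by ring]
  set S2 : Set E2 := (Aᶜ ∩ B) \ {0} with hS2
  have term2 : ∫⁻ y in S2, G y ≤ K₂ * .ofReal (2^(2+β-γ)) * .ofReal (R^(2-β-γ)) := by
    have hb2 : ∀ y ∈ S2, G y ≤ ENNReal.ofReal (‖y‖^(-γ)) * ENNReal.ofReal ((R/2)^(-β)) := by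
      intro y hy
      have hy0 : 0 < ‖y‖ := norm_pos_iff.2 (by simpa using hy.2)
      have hdx : R/2 ≤ dist x y := by
        have h := hy.1.1
        rw [hA, mem_compl_iff, mem_ball, not_lt] at h
        rwa [dist_comm]
      refine mul_le_mul' (ENNReal.ofReal_le_ofReal ?_) (ENNReal.ofReal_le_ofReal ?_)
      · exact Real.rpow_le_rpow_of_nonpos hy0 (by linarith [norm_nonneg y]) (by linarith)
      · exact Real.rpow_le_rpow_of_nonpos (by positivity) hdx (by linarith)
    calc ∫⁻ y in S2, G y
        ≤ ∫⁻ y in S2, ENNReal.ofReal (‖y‖^(-γ)) * ENNReal.ofReal ((R/2)^(-β)) :=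
          setLIntegral_mono' (((measurableSet_ball.compl.inter measurableSet_ball).diff
            (measurableSet_singleton 0))) hb2
      _ = (∫⁻ y in S2, ENNReal.ofReal (‖y‖^(-γ))) * ENNReal.ofReal ((R/2)^(-β)) :=
          lintegral_mul_const' _ _ ofReal_ne_top
      _ ≤ (∫⁻ y in B, ENNReal.ofReal (‖y‖^(-γ))) * ENNReal.ofReal ((R/2)^(-β)) := by
          gcongr
          exact fun y hy => hy.1.2
      _ ≤ K₂ * ENNReal.ofReal ((2*R)^(2-γ)) * ENNReal.ofReal ((R/2)^(-β)) := by
          gcongr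
          have := hK₂ 0 (2*R) (by positivity)
          simpa only [dist_zero_left] using this
      _ = K₂ * .ofReal (2^(2+β-γ)) * .ofReal (R^(2-β-γ)) := by
          rw [mul_assoc, mul_assoc, ← ENNReal.ofReal_mul (by positivity)]
          congr 2
          rw [← ENNReal.ofReal_mul (by positivity)]
          congr 1
          have h2i : ((2:ℝ)^(-β))⁻¹ = 2^β := by
            rw [← Real.rpow_neg (by norm_num : (0:ℝ) ≤ 2), neg_neg]
          rw [Real.mul_rpow (by norm_num : (0:ℝ) ≤ 2) hR0.le,
            Real.div_rpow hR0.le (by norm_num : (0:ℝ) ≤ 2), div_eq_mul_inv, h2i,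
            mul_mul_mul_comm, mul_comm ((2:ℝ)^(2-γ)), mul_mul_mul_comm,
            ← Real.rpow_add hR0, ← Real.rpow_add (by norm_num : (0:ℝ) < 2)]
          rw [show -β + (2-γ) = 2-β-γ by ring, show (2:ℝ) - γ + β = 2+β-γ by ring]
          ring
  have term3 : ∫⁻ y in Bᶜ, G y ≤ K₃ * .ofReal (2^(2-γ)) * .ofReal (R^(2-β-γ)) := by
    have hb3 : ∀ y ∈ Bᶜ, G y ≤ ENNReal.ofReal (2^β) * ENNReal.ofReal (‖y‖^(-(γ+β))) := by
      intro y hy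
      have hyR : 2*R ≤ ‖y‖ := by
        rw [hB, mem_compl_iff, mem_ball_zero_iff, not_lt] at hy
        exact hy
      have hy0 : 0 < ‖y‖ := by linarith
      have hdx : ‖y‖/2 ≤ dist x y := by
        have h1 : ‖y‖ - ‖x‖ ≤ ‖y - x‖ := norm_sub_norm_le y x
        have h2 : dist x y = ‖y - x‖ := by rw [dist_comm, dist_eq_norm]
        have h3 : ‖x‖ = R - 1 := by rw [hR]; ring
        linarith
      have hreal : (1+‖y‖)^(-γ) * dist x y ^(-β) ≤ 2^β * ‖y‖^(-(γ+β)) := by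
        have f1 : (1+‖y‖)^(-γ) ≤ ‖y‖^(-γ) :=
          Real.rpow_le_rpow_of_nonpos hy0 (by linarith) (by linarith)
        have f2 : dist x y ^(-β) ≤ (‖y‖/2)^(-β) :=
          Real.rpow_le_rpow_of_nonpos (by positivity) hdx (by linarith)
        have f3 : (‖y‖/2)^(-β) = ‖y‖^(-β) * 2^β := by
          have h2i : ((2:ℝ)^(-β))⁻¹ = 2^β := by
            rw [← Real.rpow_neg (by norm_num : (0:ℝ) ≤ 2), neg_neg]
          rw [Real.div_rpow (norm_nonneg y) (by norm_num : (0:ℝ) ≤ 2), div_eq_mul_inv, h2i]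
        have f4 : ‖y‖^(-γ) * (‖y‖^(-β) * 2^β) = 2^β * ‖y‖^(-(γ+β)) := by
          rw [← mul_assoc, ← Real.rpow_add hy0, show -γ + -β = -(γ+β) by ring]
          ring
        calc (1+‖y‖)^(-γ) * dist x y ^(-β)
            ≤ ‖y‖^(-γ) * (‖y‖/2)^(-β) := by
              apply mul_le_mul f1 f2 (Real.rpow_nonneg dist_nonneg _) (Real.rpow_nonneg hy0.le _)
          _ = 2^β * ‖y‖^(-(γ+β)) := by rw [f3, f4]
      calc G y = ENNReal.ofReal ((1+‖y‖)^(-γ) * dist x y ^(-β)) := by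
            simp only [hG]
            rw [← ENNReal.ofReal_mul (by positivity)]
        _ ≤ ENNReal.ofReal (2^β * ‖y‖^(-(γ+β))) := ENNReal.ofReal_le_ofReal hreal
        _ = ENNReal.ofReal (2^β) * ENNReal.ofReal (‖y‖^(-(γ+β))) :=
            ENNReal.ofReal_mul (by positivity)
    calc ∫⁻ y in Bᶜ, G y
        ≤ ∫⁻ y in Bᶜ, ENNReal.ofReal (2^β) * ENNReal.ofReal (‖y‖^(-(γ+β))) :=
          setLIntegral_mono' measurableSet_ball.compl hb3
      _ = ENNReal.ofReal (2^β) * ∫⁻ y in Bᶜ, ENNReal.ofReal (‖y‖^(-(γ+β))) :=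
          lintegral_const_mul' _ _ ofReal_ne_top
      _ ≤ ENNReal.ofReal (2^β) * (K₃ * ENNReal.ofReal ((2*R)^(2-(γ+β)))) := by
          gcongr
          exact hK₃ (2*R) (by positivity)
      _ = K₃ * .ofReal (2^(2-γ)) * .ofReal (R^(2-β-γ)) := by
          rw [← mul_assoc, mul_comm (ENNReal.ofReal ((2:ℝ)^β)) K₃, mul_assoc, mul_assoc,
            ← ENNReal.ofReal_mul (by positivity)]
          congr 2
          rw [← ENNReal.ofReal_mul (by positivity)]
          congr 1
          rw [Real.mul_rpow (by norm_num : (0:ℝ) ≤ 2) hR0.le, ← mul_assoc,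
            ← Real.rpow_add (by norm_num : (0:ℝ) < 2),
            show β + (2-(γ+β)) = 2-γ by ring, show (2:ℝ)-(γ+β) = 2-β-γ by ring]
  -- combine
  have hcover : Aᶜ ⊆ {0} ∪ (S2 ∪ Bᶜ) := by
    intro y hy
    by_cases hyB : y ∈ B
    · by_cases hy0 : y = (0:E2)
      · exact Or.inl (by simp [hy0])
      · exact Or.inr (Or.inl ⟨⟨hy, hyB⟩, by simpa using hy0⟩)
    · exact Or.inr (Or.inr hyB)
  have main : ∫⁻ y, G y ≤ D * ENNReal.ofReal (R^(2-β-γ)) := by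
    calc ∫⁻ y, G y = (∫⁻ y in A, G y) + ∫⁻ y in Aᶜ, G y :=
          (lintegral_add_compl _ measurableSet_ball).symm
      _ ≤ (∫⁻ y in A, G y) + ((∫⁻ y in ({0}:Set E2), G y) + ((∫⁻ y in S2, G y) + ∫⁻ y in Bᶜ, G y)) := by
          gcongr
          calc ∫⁻ y in Aᶜ, G y ≤ ∫⁻ y in {0} ∪ (S2 ∪ Bᶜ), G y := lintegral_mono_set hcover
            _ ≤ (∫⁻ y in ({0}:Set E2), G y) + ∫⁻ y in S2 ∪ Bᶜ, G y := lintegral_union_le _ _ _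
            _ ≤ (∫⁻ y in ({0}:Set E2), G y) + ((∫⁻ y in S2, G y) + ∫⁻ y in Bᶜ, G y) := by
                gcongr
                exact lintegral_union_le _ _ _
      _ ≤ K₁ * .ofReal (2^(β+γ-2)) * .ofReal (R^(2-β-γ)) +
          (0 + (K₂ * .ofReal (2^(2+β-γ)) * .ofReal (R^(2-β-γ)) +
            K₃ * .ofReal (2^(2-γ)) * .ofReal (R^(2-β-γ)))) := by
          gcongr
          rw [setLIntegral_measure_zero _ _ (measure_singleton (0:E2))]
      _ = D * ENNReal.ofReal (R^(2-β-γ)) := by rw [hD]; ring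
  -- final chain
  have lchain : ∫⁻ y, ENNReal.ofReal ‖f y / dist x y ^ β‖ ≤
      ENNReal.ofReal (D.toReal * M * R^(2-β-γ)) := by
    calc ∫⁻ y, ENNReal.ofReal ‖f y / dist x y ^ β‖
        ≤ ∫⁻ y, ENNReal.ofReal M * G y := lintegral_mono ptwise
      _ = ENNReal.ofReal M * ∫⁻ y, G y := lintegral_const_mul' _ _ ofReal_ne_top
      _ ≤ ENNReal.ofReal M * (D * ENNReal.ofReal (R^(2-β-γ))) := by gcongr
      _ = ENNReal.ofReal (D.toReal * M * R^(2-β-γ)) := by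
          rw [← ENNReal.ofReal_toReal hDf, ← ENNReal.ofReal_mul ENNReal.toReal_nonneg,
            ← ENNReal.ofReal_mul hM, ENNReal.toReal_ofReal ENNReal.toReal_nonneg]
          congr 1
          ring
  calc |∫ y, f y / dist x y ^ β| = ‖∫ y, f y / dist x y ^ β‖ := (Real.norm_eq_abs _).symm
    _ ≤ (∫⁻ y, ENNReal.ofReal ‖f y / dist x y ^ β‖).toReal := norm_integral_le_lintegral_norm _
    _ ≤ (ENNReal.ofReal (D.toReal * M * R^(2-β-γ))).toReal := by
        exact ENNReal.toReal_mono ofReal_ne_top lchain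
    _ ≤ D.toReal * M * R^(2-β-γ) := by
        rw [ENNReal.toReal_ofReal (by positivity)]
end
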